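/- Let n ≥ 3, ε > 0, and α = (-(n-1) + √((n-1)² + 4(n-2)))/2. Then the function U(r) = r^α is a supersolution of the perturbed ODE: for all r ∈ (0,1), U''(r) + ((n-2)/r + 2r/(ε+r²)) U'(r) - ((n-2)/r²) U(r) ≤ 0. -/

import Mathlib

/-- `U(r) = r^α` is a supersolution of the perturbed first-mode ODE on `(0,1)`. -/
theorem rpow_alpha_supersolution (n : ℕ) (hn : 3 ≤ n) (ε : ℝ) (hε : 0 < ε)
    (α : ℝ)
    (hα : α = (-(n - 1 : ℝ) + Real.sqrt ((n - 1 : ℝ) ^ 2 + 4 * (n - 2 : ℝ))) / 2)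
    (U : ℝ → ℝ) (hU : U = fun r : ℝ => r ^ α) :
    ∀ r ∈ Set.Ioo (0 : ℝ) 1,
      deriv (deriv U) r + ((n - 2 : ℝ) / r + 2 * r / (ε + r ^ 2)) * deriv U r
        - ((n - 2 : ℝ) / r ^ 2) * U r ≤ 0 := by
  have hn3 : (3:ℝ) ≤ (n:ℝ) := by exact_mod_cast hn
  have hd : (0:ℝ) ≤ ((n:ℝ) - 1) ^ 2 + 4 * ((n:ℝ) - 2) := by nlinarith
  have hsq : Real.sqrt (((n:ℝ) - 1) ^ 2 + 4 * ((n:ℝ) - 2)) ^ 2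
      = ((n:ℝ) - 1) ^ 2 + 4 * ((n:ℝ) - 2) := Real.sq_sqrt hd
  have hαeq : α ^ 2 + ((n:ℝ) - 1) * α - ((n:ℝ) - 2) = 0 := by
    rw [hα]; linear_combination hsq / 4
  have hα0 : 0 ≤ α := by
    rw [hα]
    have h1 : ((n:ℝ) - 1) ≤ Real.sqrt (((n:ℝ) - 1) ^ 2 + 4 * ((n:ℝ) - 2)) := by
      nlinarith [Real.sqrt_nonneg (((n:ℝ) - 1) ^ 2 + 4 * ((n:ℝ) - 2)), hsq]
    linarith
  intro r hr
  obtain ⟨hr0, hr1⟩ := hr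
  have hrne : r ≠ 0 := ne_of_gt hr0
  have hεr : 0 < ε + r ^ 2 := by positivity
  have hεrne : ε + r ^ 2 ≠ 0 := ne_of_gt hεr
  -- first derivative, eventually near r
  have hd1 : deriv U =ᶠ[nhds r] fun x : ℝ => α * x ^ (α - 1) := by
    filter_upwards [eventually_gt_nhds hr0] with x hx
    rw [hU]
    exact (Real.hasDerivAt_rpow_const (Or.inl (ne_of_gt hx))).deriv
  have hd1r : deriv U r = α * r ^ (α - 1) := by
    rw [hU]
    exact (Real.hasDerivAt_rpow_const (Or.inl hrne)).deriv
  have hd2 : deriv (deriv U) r = α * ((α - 1) * r ^ (α - 1 - 1)) := by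
    rw [hd1.deriv_eq]
    have : HasDerivAt (fun x : ℝ => α * x ^ (α - 1))
        (α * ((α - 1) * r ^ (α - 1 - 1))) r :=
      (Real.hasDerivAt_rpow_const (Or.inl hrne)).const_mul α
    exact this.deriv
  have hUr : U r = r ^ α := by rw [hU]
  set A := r ^ α with hA
  have hApos : 0 < A := Real.rpow_pos_of_pos hr0 α
  have e1 : r ^ (α - 1) = A / r := by
    rw [hA, Real.rpow_sub hr0, Real.rpow_one]
  have e2 : r ^ (α - 1 - 1) = A / r ^ 2 := by
    rw [show α - 1 - 1 = α - 2 by ring, hA, Real.rpow_sub hr0,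
      show (2:ℝ) = ((2:ℕ):ℝ) by norm_num, Real.rpow_natCast]
  rw [hd2, hd1r, hUr, e1, e2]
  have hfe : α * ((α - 1) * (A / r ^ 2))
      + (((n:ℝ) - 2) / r + 2 * r / (ε + r ^ 2)) * (α * (A / r))
      - (((n:ℝ) - 2) / r ^ 2) * A
      = α * A * (2 * r / (ε + r ^ 2) - 2 / r) / r := by
    field_simp
    ring_nf
    linear_combination (ε + r ^ 2) * hαeq
  rw [hfe]
  have hle : 2 * r / (ε + r ^ 2) - 2 / r ≤ 0 := by
    rw [sub_nonpos, div_le_div_iff₀ hεr hr0]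
    nlinarith
  have : α * A * (2 * r / (ε + r ^ 2) - 2 / r) ≤ 0 :=
    mul_nonpos_of_nonneg_of_nonpos (by positivity) hle
  exact div_nonpos_of_nonpos_of_nonneg this (le_of_lt hr0)
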